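/- Let R be a commutative ring of prime characteristic p and φ : R → R a p^(−e)-linear map. If I is a radical ideal with φ(I) ⊆ I and P is a minimal prime of I, then φ(P) ⊆ P. -/

import Mathlib

/-- Minimal primes of a radical ideal compatible with a `p^{-e}`-linear map `φ`
are again compatible with `φ`. -/
theorem stmt9 (R : Type*) [CommRing R] [IsNoetherianRing R]
    (p : ℕ) (hp : p.Prime) [CharP R p]
    (e : ℕ) (he : 0 < e) (φ : R → R)
    (hadd : ∀ x y, φ (x + y) = φ x + φ y)
    (hsemi : ∀ r x, φ (r ^ p ^ e * x) = r * φ x)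
    (I : Ideal R) (hrad : I.IsRadical) (hI : ∀ x ∈ I, φ x ∈ I)
    (P : Ideal R) (hP : P ∈ I.minimalPrimes) :
    ∀ x ∈ P, φ x ∈ P := by
  have hPprime : P.IsPrime := hP.1.1
  have hIP : I ≤ P := hP.1.2
  -- finiteness of minimal primes
  have hfin : I.minimalPrimes.Finite := by
    rw [Ideal.minimalPrimes_eq_comap]
    exact ((minimalPrimes.finite_of_isNoetherianRing (R ⧸ I)).image _)
  -- the other minimal primes
  have hfinS : (I.minimalPrimes \ {P}).Finite := hfin.diff
  set Q : Ideal R := sInf (I.minimalPrimes \ {P}) with hQ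
  -- choose c ∈ Q \ P
  have hQP : ¬ Q ≤ P := by
    intro hle
    have : hfinS.toFinset.inf id ≤ P := by
      rwa [Finset.inf_id_eq_sInf, hfinS.coe_toFinset]
    obtain ⟨P', hP'mem, hP'le⟩ := (hPprime.inf_le').mp this
    rw [Set.Finite.mem_toFinset, Set.mem_diff, Set.mem_singleton_iff] at hP'mem
    exact hP'mem.2 (le_antisymm hP'le (hP.2 ⟨hP'mem.1.1.1, hP'mem.1.1.2⟩ hP'le))
  obtain ⟨c, hcQ, hcP⟩ := SetLike.not_le_iff_exists.mp hQP
  intro x hx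
  -- c^{p^e} * x ∈ I
  have hmem : c ^ p ^ e * x ∈ I := by
    have : c ^ p ^ e * x ∈ I.radical := by
      rw [← Ideal.sInf_minimalPrimes, Submodule.mem_sInf]
      intro J hJ
      by_cases hJP : J = P
      · subst hJP; exact Ideal.mul_mem_left J _ hx
      · have hJprime : Ideal.IsPrime J := hJ.1.1
        have hcJ : c ∈ J := (sInf_le (show J ∈ I.minimalPrimes \ {P} from ⟨hJ, hJP⟩) : Q ≤ J) hcQ
        exact Ideal.mul_mem_right _ J (Ideal.pow_mem_of_mem J hcJ _ (pow_pos hp.pos e))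
    exact hrad this
  have : c * φ x ∈ P := by
    rw [← hsemi c x]
    exact hIP (hI _ hmem)
  rcases hPprime.mem_or_mem this with h | h
  · exact absurd h hcP
  · exact h
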